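/- Let G be a graph on n vertices with independence number α(G) ≤ 2 such that oh(G) < ⌈n/2⌉, and such that every proper induced subgraph G′ of G satisfies oh(G′) ≥ ⌈|G′|/2⌉. Then for every nonempty clique K in G: K is not complete to V(G) \ K, the induced subgraph G \ K is connected, and α(G \ K) = 2. -/

import Mathlib

open SimpleGraph

/-- The spanning subgraph of `G` consisting of the edges that are bichromatic
(i.e. whose two endpoints receive different colors) under the 2-coloring `c`. -/
def SimpleGraph.bichromaticSubgraph {V : Type*} (G : SimpleGraph V) (c : V → Bool) :
    SimpleGraph V where
  Adj u v := G.Adj u v ∧ c u ≠ c v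
  symm := ⟨fun u v h => ⟨h.1.symm, h.2.symm⟩⟩
  loopless := ⟨fun v h => h.2 rfl⟩

/-- `G` contains an odd `K t` minor: there are `t` pairwise disjoint nonempty branch sets
and a 2-coloring of the vertices such that each branch set induces a connected subgraph
using only bichromatic edges (so it carries a spanning tree all of whose edges are
bichromatic), and every two branch sets are joined by a monochromatic edge of `G`. -/
def SimpleGraph.HasOddKMinor {V : Type*} (G : SimpleGraph V) (t : ℕ) : Prop :=
  ∃ (c : V → Bool) (B : Fin t → Set V),
    (∀ i, (B i).Nonempty) ∧
    (Pairwise fun i j => Disjoint (B i) (B j)) ∧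
    (∀ i, ((G.bichromaticSubgraph c).induce (B i)).Connected) ∧
    (∀ i j, i ≠ j → ∃ u ∈ B i, ∃ v ∈ B j, G.Adj u v ∧ c u = c v)

/-- `oh G` is the largest `t` such that `G` contains an odd `K t` minor. -/
noncomputable def SimpleGraph.oh {V : Type*} (G : SimpleGraph V) : ℕ :=
  sSup {t | G.HasOddKMinor t}

/-- The independence number of `G`. -/
noncomputable def SimpleGraph.indepNum' {V : Type*} (G : SimpleGraph V) : ℕ :=
  Gᶜ.cliqueNum

/-- The join of two vertex-disjoint graphs: take the disjoint union and add all
edges between the two parts. -/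
def SimpleGraph.joinG {α β : Type*} (G : SimpleGraph α) (H : SimpleGraph β) :
    SimpleGraph (α ⊕ β) where
  Adj u v := match u, v with
    | Sum.inl a, Sum.inl b => G.Adj a b
    | Sum.inr a, Sum.inr b => H.Adj a b
    | _, _ => True
  symm := by constructor; rintro (a | a) (b | b) h <;> first | exact h.symm | trivial
  loopless := by constructor; rintro (a | a) h <;> exact h.ne rfl


namespace OddAux
variable {V : Type*}

lemma hasOddKMinor_zero (G : SimpleGraph V) : G.HasOddKMinor 0 :=
  ⟨fun _ => true, fun i => i.elim0, fun i => i.elim0, fun i => i.elim0,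
   fun i => i.elim0, fun i => i.elim0⟩

lemma bddAbove_minor (G : SimpleGraph V) [Fintype V] :
    BddAbove {t | G.HasOddKMinor t} := by
  refine ⟨Fintype.card V, ?_⟩
  rintro t ⟨c, B, hne, hdisj, -, -⟩
  choose x hx using hne
  have hinj : Function.Injective x := by
    intro i j hij
    by_contra h
    exact Set.disjoint_left.mp (hdisj h) (hx i) (hij ▸ hx j)
  simpa using Fintype.card_le_of_injective x hinj

lemma le_oh (G : SimpleGraph V) [Fintype V] {t : ℕ} (h : G.HasOddKMinor t) : t ≤ G.oh :=
  le_csSup (bddAbove_minor G) h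

lemma hasOddKMinor_oh (G : SimpleGraph V) [Fintype V] : G.HasOddKMinor G.oh :=
  Nat.sSup_mem (⟨0, hasOddKMinor_zero G⟩ : Set.Nonempty {t | G.HasOddKMinor t}) (bddAbove_minor G)

lemma induce_singleton_connected (G : SimpleGraph V) (x : V) :
    (G.induce {x}).Connected := by
  have hne : Nonempty ({x} : Set V) := ⟨⟨x, rfl⟩⟩
  refine ⟨fun a b => ?_⟩
  have : a = b := Subtype.ext (a.2.trans b.2.symm)
  rw [this]

lemma clique_minor (G : SimpleGraph V) {C : Finset V} (hC : G.IsClique (C : Set V)) :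
    G.HasOddKMinor C.card := by
  refine ⟨fun _ => true, fun i => {(C.equivFin.symm i : V)}, fun i => ⟨_, rfl⟩, ?_, ?_, ?_⟩
  · intro i j hij
    rw [Set.disjoint_singleton_left]
    intro h
    exact hij (C.equivFin.symm.injective (Subtype.val_injective (Set.mem_singleton_iff.mp h)))
  · intro i; exact induce_singleton_connected _ _
  · intro i j hij
    refine ⟨_, rfl, _, rfl, ?_, rfl⟩
    exact hC (C.equivFin.symm i).2 (C.equivFin.symm j).2
      (fun h => hij (C.equivFin.symm.injective (Subtype.val_injective h)))

lemma two_cliques_contra (G : SimpleGraph V) [Fintype V]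
    (hoh : G.oh < (Fintype.card V + 1) / 2)
    {C1 C2 : Finset V} (h1 : G.IsClique (C1 : Set V)) (h2 : G.IsClique (C2 : Set V))
    (hcover : ∀ v, v ∈ C1 ∨ v ∈ C2) : False := by
  classical
  have hcard : Fintype.card V ≤ C1.card + C2.card := by
    calc Fintype.card V = Finset.univ.card (α := V) := (Finset.card_univ).symm
    _ ≤ (C1 ∪ C2).card := Finset.card_le_card (fun v _ => Finset.mem_union.mpr (hcover v))
    _ ≤ C1.card + C2.card := Finset.card_union_le _ _
  have t1 := le_oh G (clique_minor G h1)
  have t2 := le_oh G (clique_minor G h2)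
  omega

lemma indep_three (G : SimpleGraph V) [Fintype V] {u v w : V}
    (huv : u ≠ v) (huw : u ≠ w) (hvw : v ≠ w)
    (nuv : ¬G.Adj u v) (nuw : ¬G.Adj u w) (nvw : ¬G.Adj v w) :
    3 ≤ G.indepNum' := by
  classical
  have hclique : Gᶜ.IsClique (({u, v, w} : Finset V) : Set V) := by
    intro x hx y hy hxy
    simp only [Finset.coe_insert, Finset.coe_singleton, Set.mem_insert_iff,
      Set.mem_singleton_iff] at hx hy
    have adj : ∀ a b : V, a ≠ b → ¬G.Adj a b → Gᶜ.Adj a b := fun a b h1 h2 => by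
      rw [SimpleGraph.compl_adj]; exact ⟨h1, h2⟩
    rcases hx with rfl | rfl | rfl <;> rcases hy with rfl | rfl | rfl <;>
      first
        | exact absurd rfl hxy
        | exact adj _ _ hxy (by assumption)
        | exact adj _ _ hxy (fun h => (by assumption : ¬G.Adj _ _) h.symm)
  have hcard : ({u, v, w} : Finset V).card = 3 := by
    rw [Finset.card_insert_of_notMem (by simp [huv, huw]),
      Finset.card_insert_of_notMem (by simp [hvw]), Finset.card_singleton]
  have := @SimpleGraph.IsClique.card_le_cliqueNum V Gᶜ _ {u, v, w} hclique
  rw [hcard] at this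
  exact this

end OddAux

namespace OddAux2
variable {V : Type*}

lemma exists_hit_color {W : Type*} (G : SimpleGraph W) {t : ℕ} {c : W → Bool}
    {B : Fin t → Set W}
    (hne : ∀ i, (B i).Nonempty)
    (hmono : ∀ i j, i ≠ j → ∃ u ∈ B i, ∃ v ∈ B j, G.Adj u v ∧ c u = c v) :
    ∃ b, ∀ j, ∃ v ∈ B j, c v = b := by
  by_contra h
  push_neg at h
  obtain ⟨j1, hj1⟩ := h true
  obtain ⟨j2, hj2⟩ := h false
  have hne12 : j1 ≠ j2 := by
    rintro rfl
    obtain ⟨v, hv⟩ := hne j1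
    cases hb : c v
    · exact hj2 v hv hb
    · exact hj1 v hv hb
  obtain ⟨u, hu, v, hv, -, huv⟩ := hmono j1 j2 hne12
  have h1 : c u ≠ true := hj1 u hu
  have h2 : c v ≠ false := hj2 v hv
  simp only [Bool.not_eq_true] at h1
  simp only [Bool.not_eq_false] at h2
  rw [h1, h2] at huv
  exact Bool.false_ne_true huv

lemma transfer (G : SimpleGraph V) {S : Set V} {t : ℕ} (c : S → Bool) (B : Fin t → Set S)
    (hne : ∀ i, (B i).Nonempty)
    (hdisj : Pairwise fun i j => Disjoint (B i) (B j))
    (hconn : ∀ i, (((G.induce S).bichromaticSubgraph c).induce (B i)).Connected)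
    (hmono : ∀ i j, i ≠ j → ∃ u ∈ B i, ∃ v ∈ B j, (G.induce S).Adj u v ∧ c u = c v)
    (b : Bool) :
    ∃ (c' : V → Bool) (B' : Fin t → Set V),
      (∀ v : S, c' v = c v) ∧ (∀ v, v ∉ S → c' v = b) ∧
      (∀ i, B' i = Subtype.val '' B i) ∧
      (∀ i, (B' i).Nonempty) ∧
      (Pairwise fun i j => Disjoint (B' i) (B' j)) ∧
      (∀ i, ((G.bichromaticSubgraph c').induce (B' i)).Connected) ∧
      (∀ i j, i ≠ j → ∃ u ∈ B' i, ∃ v ∈ B' j, G.Adj u v ∧ c' u = c' v) := by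
  classical
  set c' : V → Bool := fun v => if h : v ∈ S then c ⟨v, h⟩ else b with hc'def
  have hc'S : ∀ v : S, c' v = c v := fun v => dif_pos v.2
  refine ⟨c', fun i => Subtype.val '' B i, hc'S, fun v hv => dif_neg hv, fun _ => rfl,
    fun i => (hne i).image _, ?_, ?_, ?_⟩
  · intro i j hij
    exact (hdisj hij).image (f := fun x : S => (x : V))
      (Set.injOn_of_injective Subtype.val_injective) (Set.subset_univ _) (Set.subset_univ _)
  · intro i
    let f : (((G.induce S).bichromaticSubgraph c).induce (B i)) →g
        ((G.bichromaticSubgraph c').induce (Subtype.val '' B i)) :=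
      { toFun := fun x => ⟨(x.1 : V), ⟨x.1, x.2, rfl⟩⟩
        map_rel' := by
          rintro x y hadj
          show G.Adj (x.1 : V) (y.1 : V) ∧ c' (x.1 : V) ≠ c' (y.1 : V)
          refine ⟨hadj.1, ?_⟩
          show c' (x.1 : V) ≠ c' (y.1 : V)
          rw [hc'S x.1, hc'S y.1]
          exact hadj.2 }
    refine Connected.map f ?_ (hconn i)
    rintro ⟨u, x, hx, hval⟩
    exact ⟨⟨x, hx⟩, Subtype.ext (by exact hval)⟩
  · intro i j hij
    obtain ⟨u, hu, v, hv, hadj, huv⟩ := hmono i j hij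
    refine ⟨u, ⟨u, hu, rfl⟩, v, ⟨v, hv, rfl⟩, hadj, ?_⟩
    rw [hc'S u, hc'S v, huv]

end OddAux2

namespace OddAux3
open OddAux OddAux2
variable {V : Type*}

lemma indepNum_induce_le (G : SimpleGraph V) [Fintype V] (S : Set V) :
    (G.induce S).indepNum' ≤ G.indepNum' := by
  classical
  haveI : Fintype S := Fintype.ofFinite _
  obtain ⟨s, hs⟩ := SimpleGraph.exists_isNClique_cliqueNum (G := (G.induce S)ᶜ)
  have himg : Gᶜ.IsClique ((s.image Subtype.val : Finset V) : Set V) := by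
    intro x hx y hy hxy
    simp only [Finset.coe_image, Set.mem_image, Finset.mem_coe] at hx hy
    obtain ⟨p, hp, rfl⟩ := hx
    obtain ⟨q, hq, rfl⟩ := hy
    have hpq : p ≠ q := fun h => hxy (by rw [h])
    have hadj := hs.isClique hp hq hpq
    rw [SimpleGraph.compl_adj] at hadj ⊢
    exact ⟨hxy, fun h => hadj.2 h⟩
  have hcard := @SimpleGraph.IsClique.card_le_cliqueNum V Gᶜ _ (s.image Subtype.val) himg
  rw [Finset.card_image_of_injective s Subtype.val_injective, hs.card_eq] at hcard
  exact hcard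

end OddAux3

open OddAux OddAux2 OddAux3

theorem statement13 {V : Type*} [Fintype V] (G : SimpleGraph V)
    (hα : G.indepNum' ≤ 2) (hoh : G.oh < (Fintype.card V + 1) / 2)
    (hmin : ∀ s : Finset V, s ≠ Finset.univ →
      (s.card + 1) / 2 ≤ (G.induce (s : Set V)).oh) :
    ∀ K : Finset V, K.Nonempty → G.IsClique (K : Set V) →
      (¬ ∀ u ∈ K, ∀ v, v ∉ K → G.Adj u v) ∧
      (G.induce ((K : Set V)ᶜ)).Connected ∧
      (G.induce ((K : Set V)ᶜ)).indepNum' = 2 := by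
  classical
  intro K hKne hKclique
  set n := Fintype.card V with hn
  -- Part (a)
  have parta : ¬ ∀ u ∈ K, ∀ v, v ∉ K → G.Adj u v := by
    intro hcomp
    set s : Finset V := Kᶜ with hs
    have hsmem : ∀ v, v ∈ (s : Set V) ↔ v ∉ K := by
      intro v; rw [Finset.mem_coe, hs, Finset.mem_compl]
    have hsne : s ≠ Finset.univ := by
      obtain ⟨k0, hk0⟩ := hKne
      intro h
      have : k0 ∈ s := h ▸ Finset.mem_univ k0
      rw [hs, Finset.mem_compl] at this
      exact this hk0
    have hm := hmin s hsne
    set t := (G.induce (s : Set V)).oh with ht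
    set k := K.card with hk
    obtain ⟨c, B, hne, hdisj, hconn, hmono⟩ := hasOddKMinor_oh (G.induce (s : Set V))
    obtain ⟨b, hb⟩ := exists_hit_color _ hne hmono
    obtain ⟨c', B', hc'S, hc'out, hB', hne', hdisj', hconn', hmono'⟩ :=
      transfer G c B hne hdisj hconn hmono b
    let e : Fin k → V := fun i => ((K.equivFin.symm i : K) : V)
    have he_mem : ∀ i, e i ∈ K := fun i => (K.equivFin.symm i).2
    have he_inj : Function.Injective e := fun i j h =>
      K.equivFin.symm.injective (Subtype.val_injective h)
    have hBs : ∀ i, B' i ⊆ (s : Set V) := by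
      intro i
      rw [hB' i]
      exact Subtype.coe_image_subset _ _
    have hit' : ∀ j : Fin t, ∃ w ∈ B' j, c' w = b := by
      intro j
      obtain ⟨v, hv, hcv⟩ := hb j
      refine ⟨(v : V), ?_, (hc'S v).trans hcv⟩
      rw [hB' j]
      exact ⟨v, hv, rfl⟩
    have cK : ∀ u, u ∈ K → c' u = b := fun u hu =>
      hc'out u (fun h => (hsmem u).mp h hu)
    let B2 : Fin (t + k) → Set V := fun i =>
      if h : (i : ℕ) < t then B' ⟨i, h⟩ else {e ⟨(i : ℕ) - t, by omega⟩}
    have hB2pos : ∀ (i : Fin (t + k)) (h : (i : ℕ) < t), B2 i = B' ⟨i, h⟩ :=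
      fun i h => dif_pos h
    have hB2neg : ∀ (i : Fin (t + k)) (h : ¬ (i : ℕ) < t),
        B2 i = {e ⟨(i : ℕ) - t, by omega⟩} := fun i h => dif_neg h
    have hminor : G.HasOddKMinor (t + k) := by
      refine ⟨c', B2, ?_, ?_, ?_, ?_⟩
      · intro i
        by_cases h : (i : ℕ) < t
        · rw [hB2pos i h]; exact hne' ⟨i, h⟩
        · rw [hB2neg i h]; exact ⟨_, rfl⟩
      · intro i j hij
        have hvalne : (i : ℕ) ≠ (j : ℕ) := fun h => hij (Fin.ext h)
        by_cases hi : (i : ℕ) < t <;> by_cases hj : (j : ℕ) < t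
        · rw [hB2pos i hi, hB2pos j hj]
          exact hdisj' (by simp only [ne_eq, Fin.mk.injEq]; exact hvalne)
        · rw [hB2pos i hi, hB2neg j hj, Set.disjoint_singleton_right]
          intro hmem
          exact (hsmem _).mp (hBs _ hmem) (he_mem _)
        · rw [hB2neg i hi, hB2pos j hj, Set.disjoint_singleton_left]
          intro hmem
          exact (hsmem _).mp (hBs _ hmem) (he_mem _)
        · rw [hB2neg i hi, hB2neg j hj, Set.disjoint_singleton_left, Set.mem_singleton_iff]
          intro hmem
          have := he_inj hmem
          have : (i : ℕ) - t = (j : ℕ) - t := congrArg Fin.val this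
          omega
      · intro i
        by_cases h : (i : ℕ) < t
        · rw [hB2pos i h]
          exact hconn' ⟨i, h⟩
        · rw [hB2neg i h]
          exact induce_singleton_connected _ _
      · intro i j hij
        have hvalne : (i : ℕ) ≠ (j : ℕ) := fun h => hij (Fin.ext h)
        by_cases hi : (i : ℕ) < t <;> by_cases hj : (j : ℕ) < t
        · rw [hB2pos i hi, hB2pos j hj]
          exact hmono' ⟨i, hi⟩ ⟨j, hj⟩ (by simp only [ne_eq, Fin.mk.injEq]; exact hvalne)
        · rw [hB2pos i hi, hB2neg j hj]
          obtain ⟨w, hw, hcw⟩ := hit' ⟨i, hi⟩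
          refine ⟨w, hw, _, rfl, ?_, ?_⟩
          · exact (hcomp _ (he_mem _) w ((hsmem w).mp (hBs _ hw))).symm
          · rw [hcw, cK _ (he_mem _)]
        · rw [hB2neg i hi, hB2pos j hj]
          obtain ⟨w, hw, hcw⟩ := hit' ⟨j, hj⟩
          refine ⟨_, rfl, w, hw, ?_, ?_⟩
          · exact hcomp _ (he_mem _) w ((hsmem w).mp (hBs _ hw))
          · rw [hcw, cK _ (he_mem _)]
        · rw [hB2neg i hi, hB2neg j hj]
          refine ⟨_, rfl, _, rfl, ?_, ?_⟩
          · refine hKclique (he_mem _) (he_mem _) ?_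
            intro hval
            have := he_inj hval
            have : (i : ℕ) - t = (j : ℕ) - t := congrArg Fin.val this
            omega
          · rw [cK _ (he_mem _), cK _ (he_mem _)]
    have hle := le_oh G hminor
    have hk1 : 1 ≤ k := Finset.card_pos.mpr hKne
    have hkn : k ≤ n := hn ▸ (Finset.card_le_univ K)
    have hscard : s.card = n - k := by rw [hs, Finset.card_compl]
    rw [hscard] at hm
    omega
  have hTmem : ∀ v, v ∈ ((K : Set V)ᶜ) ↔ v ∉ K := fun v => Iff.rfl
  have partb : (G.induce ((K : Set V)ᶜ)).Connected := by
    set T : Set V := (K : Set V)ᶜ with hTdef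
    by_contra hnc
    by_cases hTe : ∀ v : V, v ∈ K
    · -- T is empty: G is covered by the single clique K
      exact two_cliques_contra G hoh hKclique (C2 := ∅) (by simp) (fun v => Or.inl (hTe v))
    · push_neg at hTe
      obtain ⟨x0, hx0⟩ := hTe
      haveI hTne : Nonempty T := ⟨⟨x0, (hTmem x0).mpr hx0⟩⟩
      have hpre : ¬ (G.induce T).Preconnected := fun h => hnc ⟨h⟩
      unfold SimpleGraph.Preconnected at hpre
      push_neg at hpre
      obtain ⟨a, b, hab⟩ := hpre
      set X : Finset V :=
        Finset.univ.filter (fun v => ∃ h : v ∈ T, (G.induce T).Reachable a ⟨v, h⟩) with hXdef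
      have hmemX : ∀ v, v ∈ X ↔ ∃ h : v ∈ T, (G.induce T).Reachable a ⟨v, h⟩ := by
        intro v; simp [hXdef]
      have haX : (a : V) ∈ X := (hmemX _).mpr ⟨a.2, by rw [Subtype.coe_eta]⟩
      have hbX : (b : V) ∉ X := by
        intro h
        obtain ⟨h', hr⟩ := (hmemX _).mp h
        rw [show (⟨(b : V), h'⟩ : T) = b from Subtype.ext rfl] at hr
        exact hab hr
      have hXT : ∀ v, v ∈ X → v ∈ T := fun v hv => ((hmemX v).mp hv).1
      have key : ∀ u, u ∈ X → ∀ w, w ∈ T → w ∉ X → ¬G.Adj u w := by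
        intro u hu w hwT hwX hadj
        obtain ⟨huT, hr⟩ := (hmemX u).mp hu
        apply hwX
        refine (hmemX w).mpr ⟨hwT, hr.trans (SimpleGraph.Adj.reachable ?_)⟩
        exact hadj
      have hXclique : G.IsClique (X : Set V) := by
        intro u hu v hv huv
        rw [Finset.mem_coe] at hu hv
        by_contra hadj
        have h3 := indep_three G huv (fun h => hbX (by rw [← h]; exact hu))
          (fun h => hbX (by rw [← h]; exact hv))
          hadj (key u hu _ b.2 hbX) (key v hv _ b.2 hbX)
        omega
      set KX : Finset V := K.filter (fun u => ∀ v ∈ X, G.Adj u v) with hKXdef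
      set C1 : Finset V := X ∪ KX with hC1def
      have hC1clique : G.IsClique (C1 : Set V) := by
        intro u hu v hv huv
        rw [Finset.mem_coe, hC1def, Finset.mem_union] at hu hv
        rcases hu with hu | hu <;> rcases hv with hv | hv
        · exact hXclique hu hv huv
        · exact ((Finset.mem_filter.mp hv).2 u hu).symm
        · exact (Finset.mem_filter.mp hu).2 v hv
        · exact hKclique (Finset.mem_filter.mp hu).1 (Finset.mem_filter.mp hv).1 huv
      have hYadj : ∀ y z, y ∈ T → y ∉ X → z ∈ T → z ∉ X → y ≠ z → G.Adj y z := by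
        intro y z hyT hyX hzT hzX hyz
        by_contra hadj
        have h3 := indep_three G (u := (a : V)) (fun h => hyX (by rw [← h]; exact haX))
          (fun h => hzX (by rw [← h]; exact haX)) hyz
          (key _ haX y hyT hyX) (key _ haX z hzT hzX) hadj
        omega
      have hKYadj : ∀ kv, kv ∈ K → kv ∉ KX → ∀ y, y ∈ T → y ∉ X → G.Adj kv y := by
        intro kv hkv hkvX y hyT hyX
        have : ∃ u ∈ X, ¬G.Adj kv u := by
          by_contra h
          push_neg at h
          exact hkvX (Finset.mem_filter.mpr ⟨hkv, h⟩)
        obtain ⟨u0, hu0, hnadj⟩ := this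
        by_contra hadj
        have hu0T : u0 ∈ T := hXT u0 hu0
        have h3 := indep_three G (u := kv) (v := u0) (w := y)
          (fun h => ((hTmem u0).mp hu0T) (h ▸ hkv))
          (fun h => ((hTmem y).mp hyT) (h ▸ hkv))
          (fun h => hyX (h ▸ hu0))
          hnadj hadj (fun h => (key u0 hu0 y hyT hyX) h)
        omega
      set C2 : Finset V := Finset.univ \ C1 with hC2def
      have hC2clique : G.IsClique (C2 : Set V) := by
        intro u hu v hv huv
        rw [Finset.mem_coe, hC2def, Finset.mem_sdiff] at hu hv
        have hu' := hu.2
        have hv' := hv.2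
        rw [hC1def, Finset.mem_union] at hu' hv'
        push_neg at hu' hv'
        by_cases huK : u ∈ K <;> by_cases hvK : v ∈ K
        · exact hKclique huK hvK huv
        · exact hKYadj u huK hu'.2 v ((hTmem v).mpr hvK) hv'.1
        · exact (hKYadj v hvK hv'.2 u ((hTmem u).mpr huK) hu'.1).symm
        · exact hYadj u v ((hTmem u).mpr huK) hu'.1 ((hTmem v).mpr hvK) hv'.1 huv
      refine two_cliques_contra G hoh hC1clique hC2clique (fun v => ?_)
      by_cases h : v ∈ C1
      · exact Or.inl h
      · exact Or.inr (Finset.mem_sdiff.mpr ⟨Finset.mem_univ v, h⟩)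
  refine ⟨parta, partb, ?_⟩
  set T : Set V := (K : Set V)ᶜ with hTdef
  haveI : Fintype T := Fintype.ofFinite _
  have hle : (G.induce T).indepNum' ≤ 2 := le_trans (indepNum_induce_le G T) hα
  have hpair : ∃ x ∈ T, ∃ y ∈ T, x ≠ y ∧ ¬G.Adj x y := by
    by_contra h
    push_neg at h
    have hTclique : G.IsClique ((Kᶜ : Finset V) : Set V) := by
      intro x hx y hy hxy
      rw [Finset.coe_compl] at hx hy
      exact h x hx y hy hxy
    exact two_cliques_contra G hoh hKclique hTclique
      (fun v => by
        by_cases hv : v ∈ K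
        · exact Or.inl hv
        · exact Or.inr (Finset.mem_compl.mpr hv))
  obtain ⟨x, hxT, y, hyT, hxy, hnadj⟩ := hpair
  have hge : 2 ≤ (G.induce T).indepNum' := by
    have hsubne : (⟨x, hxT⟩ : T) ≠ ⟨y, hyT⟩ := fun h => hxy (congrArg Subtype.val h)
    have hclique : ((G.induce T)ᶜ).IsClique
        (({⟨x, hxT⟩, ⟨y, hyT⟩} : Finset T) : Set T) := by
      intro u hu v hv huv
      simp only [Finset.coe_insert, Finset.coe_singleton, Set.mem_insert_iff,
        Set.mem_singleton_iff] at hu hv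
      rw [SimpleGraph.compl_adj]
      refine ⟨huv, ?_⟩
      rcases hu with rfl | rfl <;> rcases hv with rfl | rfl
      · exact absurd rfl huv
      · exact fun hadj => hnadj hadj
      · exact fun hadj => hnadj hadj.symm
      · exact absurd rfl huv
    have hcard := @SimpleGraph.IsClique.card_le_cliqueNum T (G.induce T)ᶜ _
      {⟨x, hxT⟩, ⟨y, hyT⟩} hclique
    rw [Finset.card_pair hsubne] at hcard
    exact hcard
  exact le_antisymm hle hge
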